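/- Let X be a Hausdorff topological space and let Γ ⊆ Homeo(X) be a subgroup with small supports everywhere. Let f, h ∈ Homeo(X), and suppose there exists a group isomorphism φ : ⟨Γ, f⟩ → ⟨Γ, h⟩ such that φ(γ) = γ for every γ ∈ Γ and φ(f) = h. Then Supp(f) = Supp(h). -/
import Mathlib


open Set Topology

variable {X : Type*} [TopologicalSpace X]

/-- The group of self-homeomorphisms of `X`, with `(f * g) x = f (g x)`. -/
instance : Group (X ≃ₜ X) where
  mul f g := g.trans f
  one := Homeomorph.refl X
  inv := Homeomorph.symm
  mul_assoc _ _ _ := Homeomorph.ext fun _ => rfl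
  one_mul _ := Homeomorph.ext fun _ => rfl
  mul_one _ := Homeomorph.ext fun _ => rfl
  inv_mul_cancel f := Homeomorph.ext fun x => f.symm_apply_apply x

/-- The support of a homeomorphism: the closure of the set of non-fixed points. -/
def Supp (f : X ≃ₜ X) : Set X := closure {x | f x ≠ x}

/-- A subgroup `Γ ⊆ Homeo(X)` has small supports everywhere if every nonempty open set
contains the support of some nontrivial element of `Γ`. -/
def SmallSupportsEverywhere (Γ : Subgroup (X ≃ₜ X)) : Prop :=
  ∀ U : Set X, IsOpen U → U.Nonempty → ∃ γ ∈ Γ, γ ≠ 1 ∧ Supp γ ⊆ U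

lemma mul_apply' (f g : X ≃ₜ X) (x : X) : (f * g) x = f (g x) := rfl

lemma apply_eq_of_not_mem_supp {f : X ≃ₜ X} {x : X} (hx : x ∉ Supp f) : f x = x := by
  by_contra hfx
  exact hx (subset_closure hfx)

lemma apply_mem_supp {f : X ≃ₜ X} {x : X} (hx : f x ≠ x) : f x ∈ Supp f :=
  subset_closure (show f (f x) ≠ f x from fun e => hx (f.injective e))

lemma commute_of_disjoint_supp {f g : X ≃ₜ X} (hd : ∀ x, x ∈ Supp g → x ∉ Supp f) :
    f * g = g * f := by
  refine Homeomorph.ext fun x => ?_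
  show f (g x) = g (f x)
  by_cases hg : g x = x
  · by_cases hf : f x = x
    · rw [hg, hf, hg]
    · have : g (f x) = f x :=
        apply_eq_of_not_mem_supp fun hm => hd _ hm (apply_mem_supp hf)
      rw [hg, this]
  · have hxg : x ∈ Supp g := subset_closure hg
    have hgx : g x ∈ Supp g := apply_mem_supp hg
    rw [apply_eq_of_not_mem_supp (hd _ hxg), apply_eq_of_not_mem_supp (hd _ hgx)]

lemma supp_subset_of_comm {Γ : Subgroup (X ≃ₜ X)} [T2Space X]
    (hΓ : SmallSupportsEverywhere Γ) {f h : X ≃ₜ X}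
    (hc : ∀ γ ∈ Γ, f * γ = γ * f → h * γ = γ * h) :
    Supp h ⊆ Supp f := by
  intro x hx
  by_contra hxf
  -- U : open complement of Supp f
  have hU : IsOpen (Supp f)ᶜ := isOpen_compl_iff.mpr isClosed_closure
  -- show h is identity on U, contradicting x ∈ Supp h
  have key : ∀ y ∈ (Supp f)ᶜ, h y = y := by
    intro y hy
    by_contra hhy
    obtain ⟨W2, W1, hW2, hW1, hhyW2, hyW1, hdisj⟩ := t2_separation hhy
    set V := (Supp f)ᶜ ∩ W1 ∩ h ⁻¹' W2 with hV
    have hVopen : IsOpen V := ((hU.inter hW1).inter (hW2.preimage h.continuous))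
    have hyV : y ∈ V := ⟨⟨hy, hyW1⟩, hhyW2⟩
    obtain ⟨γ, hγΓ, hγ1, hγsupp⟩ := hΓ V hVopen ⟨y, hyV⟩
    have hcomm : h * γ = γ * h := by
      refine hc γ hγΓ (commute_of_disjoint_supp fun z hz => ?_)
      exact (hγsupp hz).1.1
    obtain ⟨z, hz⟩ : ∃ z, γ z ≠ z := by
      by_contra hall
      push_neg at hall
      exact hγ1 (Homeomorph.ext hall)
    have hzV : z ∈ V := hγsupp (subset_closure hz)
    have hhz : h z ∈ W2 := hzV.2
    have hhz' : γ (h z) = h z := by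
      apply apply_eq_of_not_mem_supp
      intro hmem
      exact hdisj.symm.le_bot ⟨(hγsupp hmem).1.2, hhz⟩
    have := congrArg (fun k : X ≃ₜ X => k z) hcomm
    simp only [mul_apply'] at this
    rw [hhz'] at this
    exact hz (h.injective this)
  exact (mem_closure_iff.mp hx _ hU hxf).elim
    fun z hz => hz.2 (key z hz.1)

theorem supp_eq_of_iso_small_supports
    {X : Type*} [TopologicalSpace X] [T2Space X]
    (Γ : Subgroup (X ≃ₜ X)) (hΓ : SmallSupportsEverywhere Γ)
    (f h : X ≃ₜ X)
    (φ : Subgroup.closure ((Γ : Set (X ≃ₜ X)) ∪ {f}) ≃*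
         Subgroup.closure ((Γ : Set (X ≃ₜ X)) ∪ {h}))
    (hφΓ : ∀ (γ : X ≃ₜ X) (hγ : γ ∈ Γ),
      ((φ ⟨γ, Subgroup.subset_closure (Set.mem_union_left _ hγ)⟩ : _) : X ≃ₜ X) = γ)
    (hφf : ((φ ⟨f, Subgroup.subset_closure
        (Set.mem_union_right _ (Set.mem_singleton f))⟩ : _) : X ≃ₜ X) = h) :
    Supp f = Supp h := by
  set F : Subgroup.closure ((Γ : Set (X ≃ₜ X)) ∪ {f}) :=
    ⟨f, Subgroup.subset_closure (Set.mem_union_right _ (Set.mem_singleton f))⟩ with hF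
  set H : Subgroup.closure ((Γ : Set (X ≃ₜ X)) ∪ {h}) :=
    ⟨h, Subgroup.subset_closure (Set.mem_union_right _ (Set.mem_singleton h))⟩ with hH
  have hφF : φ F = H := Subtype.ext hφf
  have hφG : ∀ (γ : X ≃ₜ X) (hγ : γ ∈ Γ),
      φ ⟨γ, Subgroup.subset_closure (Set.mem_union_left _ hγ)⟩ =
        ⟨γ, Subgroup.subset_closure (Set.mem_union_left _ hγ)⟩ :=
    fun γ hγ => Subtype.ext (hφΓ γ hγ)
  apply Set.Subset.antisymm
  · -- Supp f ⊆ Supp h : use φ.symm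
    refine supp_subset_of_comm hΓ (fun γ hγ hcomm => ?_)
    -- h * γ = γ * h ⇒ f * γ = γ * f via φ.symm
    have G2 : Subgroup.closure ((Γ : Set (X ≃ₜ X)) ∪ {h}) :=
      ⟨γ, Subgroup.subset_closure (Set.mem_union_left _ hγ)⟩
    have e : H * ⟨γ, Subgroup.subset_closure (Set.mem_union_left _ hγ)⟩
        = ⟨γ, Subgroup.subset_closure (Set.mem_union_left _ hγ)⟩ * H :=
      Subtype.ext hcomm
    have := congrArg φ.symm e
    rw [map_mul, map_mul, ← hφF, ← hφG γ hγ, φ.symm_apply_apply, φ.symm_apply_apply] at this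
    exact congrArg Subtype.val this
  · refine supp_subset_of_comm hΓ (fun γ hγ hcomm => ?_)
    have e : F * ⟨γ, Subgroup.subset_closure (Set.mem_union_left _ hγ)⟩
        = ⟨γ, Subgroup.subset_closure (Set.mem_union_left _ hγ)⟩ * F :=
      Subtype.ext hcomm
    have := congrArg φ e
    rw [map_mul, map_mul, hφF, hφG γ hγ] at this
    exact congrArg Subtype.val this
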